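/- For any prime p ≥ 11, any integer s with 0 ≤ s ≤ (p-1)/2, and any nonnegative integer r, there exist integers a_0, ..., a_{p-1} with Σ a_j = s and (1/2)(p·Σ a_j^2 − s^2) = s(p−s)/2 + r·p. -/
import Mathlib


open Finset

private def gfun (c0 c1 c2 c3 w x y z : ℤ) (m : ℕ) : ℕ → ℤ := fun j =>
  if j = 0 then c0 + w else if j = 1 then c0 - w else
  if j = 2 then c1 + x else if j = 3 then c1 - x else
  if j = 4 then c2 + y else if j = 5 then c2 - y else
  if j = 6 then c3 + z else if j = 7 then c3 - z else
  if j < 8 + m then 1 else 0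

private lemma gfun_tail (c0 c1 c2 c3 w x y z : ℤ) (m j : ℕ) (hj : 8 ≤ j) :
    gfun c0 c1 c2 c3 w x y z m j = if j < 8 + m then 1 else 0 := by
  unfold gfun
  rw [if_neg (by omega), if_neg (by omega), if_neg (by omega), if_neg (by omega),
    if_neg (by omega), if_neg (by omega), if_neg (by omega), if_neg (by omega)]

private lemma tail_sum (p m : ℕ) (h : 8 + m ≤ p) :
    ∑ j ∈ Finset.Ico 8 p, (if j < 8 + m then (1:ℤ) else 0) = m := by
  rw [← Finset.sum_Ico_consecutive _ (by omega : 8 ≤ 8 + m) h]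
  have h1 : ∑ j ∈ Finset.Ico 8 (8+m), (if j < 8 + m then (1:ℤ) else 0)
      = ∑ _j ∈ Finset.Ico 8 (8+m), (1:ℤ) := by
    apply Finset.sum_congr rfl
    intro j hj
    rw [Finset.mem_Ico] at hj
    rw [if_pos hj.2]
  have h2 : ∑ j ∈ Finset.Ico (8+m) p, (if j < 8 + m then (1:ℤ) else 0) = 0 := by
    apply Finset.sum_eq_zero
    intro j hj
    rw [Finset.mem_Ico] at hj
    rw [if_neg (by omega)]
  rw [h1, h2]
  simp

private lemma g_sum (p : ℕ) (c0 c1 c2 c3 w x y z : ℤ) (m : ℕ) (h : 8 + m ≤ p) :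
    ∑ j ∈ Finset.range p, gfun c0 c1 c2 c3 w x y z m j
      = 2*(c0+c1+c2+c3) + m := by
  rw [Finset.range_eq_Ico,
    ← Finset.sum_Ico_consecutive _ (by omega : 0 ≤ 8) (by omega : 8 ≤ p)]
  have hhead : ∑ j ∈ Finset.Ico 0 8, gfun c0 c1 c2 c3 w x y z m j
      = 2*(c0+c1+c2+c3) := by
    rw [← Finset.range_eq_Ico]
    simp [Finset.sum_range_succ, gfun]
    ring
  have htail : ∑ j ∈ Finset.Ico 8 p, gfun c0 c1 c2 c3 w x y z m j = m := by
    rw [Finset.sum_congr rfl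
      (fun j hj => gfun_tail c0 c1 c2 c3 w x y z m j (Finset.mem_Ico.mp hj).1)]
    exact tail_sum p m h
  rw [hhead, htail]

private lemma g_sq_sum (p : ℕ) (c0 c1 c2 c3 w x y z : ℤ) (m : ℕ) (h : 8 + m ≤ p) :
    ∑ j ∈ Finset.range p, (gfun c0 c1 c2 c3 w x y z m j)^2
      = 2*(c0^2+c1^2+c2^2+c3^2) + 2*(w^2+x^2+y^2+z^2) + m := by
  rw [Finset.range_eq_Ico,
    ← Finset.sum_Ico_consecutive _ (by omega : 0 ≤ 8) (by omega : 8 ≤ p)]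
  have hhead : ∑ j ∈ Finset.Ico 0 8, (gfun c0 c1 c2 c3 w x y z m j)^2
      = 2*(c0^2+c1^2+c2^2+c3^2) + 2*(w^2+x^2+y^2+z^2) := by
    rw [← Finset.range_eq_Ico]
    simp [Finset.sum_range_succ, gfun]
    ring
  have htail : ∑ j ∈ Finset.Ico 8 p, (gfun c0 c1 c2 c3 w x y z m j)^2 = m := by
    have hc : ∀ j ∈ Finset.Ico 8 p, (gfun c0 c1 c2 c3 w x y z m j)^2
        = if j < 8 + m then (1:ℤ) else 0 := by
      intro j hj
      rw [gfun_tail c0 c1 c2 c3 w x y z m j (Finset.mem_Ico.mp hj).1]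
      split_ifs <;> norm_num
    rw [Finset.sum_congr rfl hc]
    exact tail_sum p m h
  rw [hhead, htail]

theorem values_attained_p_ge_11 (p : ℕ) (hp : p.Prime) (hp11 : 11 ≤ p)
    (s : ℤ) (hs0 : 0 ≤ s) (hs1 : s ≤ (p - 1) / 2) (r : ℕ) :
    ∃ a : Fin p → ℤ, (∑ j : Fin p, a j) = s ∧
      ((1 : ℚ) / 2) * ((p : ℚ) * (∑ j : Fin p, (a j : ℚ) ^ 2) - (s : ℚ) ^ 2)
        = (s : ℚ) * ((p : ℚ) - s) / 2 + (r : ℚ) * p := by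
  obtain ⟨A, B, C, D, hABCD⟩ := Nat.sum_four_squares r
  have hr : (A:ℤ)^2 + (B:ℤ)^2 + (C:ℤ)^2 + (D:ℤ)^2 = (r:ℤ) := by exact_mod_cast hABCD
  set S := s.toNat with hSdef
  have hSs : (S:ℤ) = s := Int.toNat_of_nonneg hs0
  have hS2 : 2 * S ≤ p - 1 := by omega
  obtain ⟨q, hq⟩ : ∃ q, q = min (S / 2) 4 := ⟨_, rfl⟩
  obtain ⟨m, hm⟩ : ∃ m, m = S - 2 * q := ⟨_, rfl⟩
  have hqm : 2 * q + m = S := by omega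
  have h8m : 8 + m ≤ p := by omega
  have hq4 : q ≤ 4 := by omega
  set c : ℕ → ℤ := fun k => if k < q then 1 else 0 with hc
  have hcsum : c 0 + c 1 + c 2 + c 3 = (q : ℤ) := by
    interval_cases q <;> norm_num [hc]
  have hcsq : c 0 ^ 2 + c 1 ^ 2 + c 2 ^ 2 + c 3 ^ 2 = (q : ℤ) := by
    interval_cases q <;> norm_num [hc]
  refine ⟨fun j : Fin p => gfun (c 0) (c 1) (c 2) (c 3) (A:ℤ) (B:ℤ) (C:ℤ) (D:ℤ) m (j:ℕ),
    ?_, ?_⟩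
  · rw [Fin.sum_univ_eq_sum_range (fun j => gfun (c 0) (c 1) (c 2) (c 3) (A:ℤ) (B:ℤ) (C:ℤ) (D:ℤ) m j) p,
      g_sum p _ _ _ _ _ _ _ _ m h8m, hcsum]
    push_cast
    omega
  · have hsq : ∑ j ∈ Finset.range p,
        (gfun (c 0) (c 1) (c 2) (c 3) (A:ℤ) (B:ℤ) (C:ℤ) (D:ℤ) m j)^2 = (S:ℤ) + 2*r := by
      rw [g_sq_sum p _ _ _ _ _ _ _ _ m h8m, hcsq]
      have : (S:ℤ) = 2*q + m := by exact_mod_cast hqm.symm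
      rw [this]
      linarith [hr]
    have key : (∑ j : Fin p,
        ((gfun (c 0) (c 1) (c 2) (c 3) (A:ℤ) (B:ℤ) (C:ℤ) (D:ℤ) m (j:ℕ) : ℚ))^2)
        = (s:ℚ) + 2*r := by
      have h1 : (∑ j : Fin p,
          ((gfun (c 0) (c 1) (c 2) (c 3) (A:ℤ) (B:ℤ) (C:ℤ) (D:ℤ) m (j:ℕ) : ℚ))^2)
          = ((∑ j ∈ Finset.range p,
            (gfun (c 0) (c 1) (c 2) (c 3) (A:ℤ) (B:ℤ) (C:ℤ) (D:ℤ) m j)^2 : ℤ) : ℚ) := by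
        rw [← Fin.sum_univ_eq_sum_range
          (fun j => (gfun (c 0) (c 1) (c 2) (c 3) (A:ℤ) (B:ℤ) (C:ℤ) (D:ℤ) m j)^2) p]
        push_cast
        rfl
      rw [h1, hsq]
      have : ((S:ℤ):ℚ) = (s:ℚ) := by exact_mod_cast hSs
      push_cast
      rw [show ((S:ℚ)) = (s:ℚ) by exact_mod_cast hSs]
    rw [key]
    ring
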